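/- The set ATP of all autotopisms σ_S of the Hall affine plane A_H is a group under composition isomorphic to GL(2, F); every autotopism maps each type 1 line to a parallel type 1 line (so ATP fixes each parallel class of type 1 lines); for any two elements m, m' ∈ H with m₂ ≠ 0 and m'₂ ≠ 0 there is an autotopism mapping the parallel class of lines of slope m onto the parallel class of lines of slope m' (so ATP acts transitively on the parallel classes of type 2 lines); and ATP has exactly two orbits on the set of vertical lines, namely the singleton {[(0,0)]} and the set of all vertical lines [c] with c ≠ (0,0). -/

import Mathlib

open Polynomial

/-- The Hall system multiplication on `F × F`, with defining polynomial `x^2 - r*x - s`. -/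
def hallMul {F : Type*} [Field F] [DecidableEq F] (r s : F) (a b : F × F) : F × F :=
  if b.2 = 0 then (a.1 * b.1, a.2 * b.1)
  else (a.1 * b.1 - a.2 * b.2⁻¹ * (b.1 ^ 2 - r * b.1 - s),
        a.1 * b.2 - a.2 * b.1 + a.2 * r)

/-- Vertical line `[c] = {(c, y)}` in the Hall affine plane. -/
def vertLine {F : Type*} (c : F × F) : Set ((F × F) × (F × F)) := {P | P.1 = c}

/-- Non-vertical line `[m, k] = {(x, x·m + k)}` in the Hall affine plane. -/
def slopeLine {F : Type*} [Field F] [DecidableEq F] (r s : F) (m k : F × F) :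
    Set ((F × F) × (F × F)) :=
  {P | P.2 = hallMul r s P.1 m + k}

/-- The lines of the Hall affine plane `A_H`. -/
def IsHallLine {F : Type*} [Field F] [DecidableEq F] (r s : F)
    (ℓ : Set ((F × F) × (F × F))) : Prop :=
  (∃ c : F × F, ℓ = vertLine c) ∨ ∃ m k : F × F, ℓ = slopeLine r s m k

/-- A collineation of the Hall affine plane: a bijection of the point set mapping
every line onto a line. -/
def IsCollineation {F : Type*} [Field F] [DecidableEq F] (r s : F)
    (φ : (F × F) × (F × F) → (F × F) × (F × F)) : Prop :=
  Function.Bijective φ ∧ ∀ ℓ, IsHallLine r s ℓ → IsHallLine r s (φ '' ℓ)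

/-- Right action of a `2 × 2` matrix on a row vector `x = (x₁, x₂)`. -/
def rmul {F : Type*} [Field F] (S : Matrix (Fin 2) (Fin 2) F) (x : F × F) : F × F :=
  (x.1 * S 0 0 + x.2 * S 1 0, x.1 * S 0 1 + x.2 * S 1 1)

/-- The autotopism `σ_S : (x,y) ↦ (xS, yS)`. -/
def sigmaMap {F : Type*} [Field F] (S : Matrix (Fin 2) (Fin 2) F) :
    (F × F) × (F × F) → (F × F) × (F × F) :=
  fun P => (rmul S P.1, rmul S P.2)

/-- The set `ATP` of all autotopisms `σ_S`, `S ∈ GL(2,F)`. -/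
def ATPset (F : Type*) [Field F] :
    Set ((F × F) × (F × F) → (F × F) × (F × F)) :=
  {f | ∃ S : GL (Fin 2) F, f = sigmaMap (S : Matrix (Fin 2) (Fin 2) F)}


section HallAux

variable {F : Type*} [Field F] [DecidableEq F]

lemma rmul_rmul (S T : Matrix (Fin 2) (Fin 2) F) (x : F × F) :
    rmul T (rmul S x) = rmul (S * T) x := by
  simp only [rmul, Matrix.mul_apply, Fin.sum_univ_two, Prod.mk.injEq]
  constructor <;> ring

lemma rmul_one (x : F × F) : rmul (1 : Matrix (Fin 2) (Fin 2) F) x = x := by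
  simp [rmul, Matrix.one_apply]

lemma rmul_add (S : Matrix (Fin 2) (Fin 2) F) (a b : F × F) :
    rmul S (a + b) = rmul S a + rmul S b := by
  simp only [rmul, Prod.mk_add_mk, Prod.fst_add, Prod.snd_add, Prod.mk.injEq]
  constructor <;> ring

lemma rmul_inv_cancel (S : GL (Fin 2) F) (u : F × F) :
    rmul (S : Matrix (Fin 2) (Fin 2) F) (rmul ((S⁻¹ : GL (Fin 2) F) : Matrix (Fin 2) (Fin 2) F) u) = u := by
  rw [rmul_rmul]
  have : ((S⁻¹ : GL (Fin 2) F) : Matrix (Fin 2) (Fin 2) F) * (S : Matrix (Fin 2) (Fin 2) F) = 1 := by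
    rw [← Units.val_mul, inv_mul_cancel, Units.val_one]
  rw [this, rmul_one]

lemma rmul_cancel_inv (S : GL (Fin 2) F) (u : F × F) :
    rmul ((S⁻¹ : GL (Fin 2) F) : Matrix (Fin 2) (Fin 2) F) (rmul (S : Matrix (Fin 2) (Fin 2) F) u) = u := by
  rw [rmul_rmul]
  have : (S : Matrix (Fin 2) (Fin 2) F) * ((S⁻¹ : GL (Fin 2) F) : Matrix (Fin 2) (Fin 2) F) = 1 := by
    rw [← Units.val_mul, mul_inv_cancel, Units.val_one]
  rw [this, rmul_one]

/-- Key lemma: if `rmul S` intertwines multiplication by `m` and by `m'`, then `σ_S`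
maps the line `[m, k]` onto the line `[m', kS]`. -/
lemma image_slopeLine (r s : F) (S : GL (Fin 2) F) (m m' k : F × F)
    (h : ∀ x : F × F, rmul (S : Matrix (Fin 2) (Fin 2) F) (hallMul r s x m)
        = hallMul r s (rmul (S : Matrix (Fin 2) (Fin 2) F) x) m') :
    sigmaMap (S : Matrix (Fin 2) (Fin 2) F) '' slopeLine r s m k
      = slopeLine r s m' (rmul (S : Matrix (Fin 2) (Fin 2) F) k) := by
  ext P
  constructor
  · rintro ⟨Q, hQ, rfl⟩
    simp only [slopeLine, Set.mem_setOf_eq] at hQ ⊢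
    simp only [sigmaMap, hQ, rmul_add, h]
  · intro hP
    simp only [slopeLine, Set.mem_setOf_eq] at hP
    refine ⟨(rmul ((S⁻¹ : GL (Fin 2) F) : Matrix (Fin 2) (Fin 2) F) P.1,
        hallMul r s (rmul ((S⁻¹ : GL (Fin 2) F) : Matrix (Fin 2) (Fin 2) F) P.1) m + k), rfl, ?_⟩
    simp only [sigmaMap, rmul_add, h, rmul_inv_cancel]
    exact Prod.ext rfl hP.symm

lemma image_vertLine (S : GL (Fin 2) F) (c : F × F) :
    sigmaMap (S : Matrix (Fin 2) (Fin 2) F) '' vertLine c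
      = vertLine (rmul (S : Matrix (Fin 2) (Fin 2) F) c) := by
  ext P
  constructor
  · rintro ⟨Q, hQ, rfl⟩
    simp only [vertLine, Set.mem_setOf_eq] at hQ ⊢
    simp [sigmaMap, hQ]
  · intro hP
    simp only [vertLine, Set.mem_setOf_eq] at hP
    exact ⟨(c, rmul ((S⁻¹ : GL (Fin 2) F) : Matrix (Fin 2) (Fin 2) F) P.2), rfl,
      by simp only [sigmaMap, rmul_inv_cancel]; exact Prod.ext hP.symm rfl⟩

lemma rmul_zero (S : Matrix (Fin 2) (Fin 2) F) : rmul S (0 : F × F) = 0 := by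
  simp [rmul]

/-- For every nonzero row vector `c` there is an invertible matrix with first row `c`. -/
lemma exists_gl_e0 (c : F × F) (hc : c ≠ 0) :
    ∃ S : GL (Fin 2) F, rmul (S : Matrix (Fin 2) (Fin 2) F) ((1 : F), (0 : F)) = c := by
  by_cases h1 : c.1 = 0
  · have h2 : c.2 ≠ 0 := fun h2 => hc (Prod.ext h1 h2)
    refine ⟨Matrix.GeneralLinearGroup.mkOfDetNeZero !![c.1, c.2; 1, 0] ?_, ?_⟩
    · simp [Matrix.det_fin_two, h2]
    · show rmul !![c.1, c.2; 1, 0] ((1 : F), (0 : F)) = c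
      simp [rmul]
  · refine ⟨Matrix.GeneralLinearGroup.mkOfDetNeZero !![c.1, c.2; 0, 1] ?_, ?_⟩
    · simp [Matrix.det_fin_two, h1]
    · show rmul !![c.1, c.2; 0, 1] ((1 : F), (0 : F)) = c
      simp [rmul]

end HallAux

/-- `ATP` is a group under composition isomorphic to `GL(2,F)` (the map `S ↦ σ_S` is an
injective anti-homomorphism, hence gives an isomorphism onto `ATP`); each autotopism maps
each type 1 line to a parallel type 1 line of the same slope; `ATP` acts transitively on the
parallel classes of type 2 lines; and `ATP` has exactly two orbits on vertical lines,
`{[(0,0)]}` and the rest. -/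
theorem ATP_autotopism_group {F : Type*} [Field F] [Fintype F] [DecidableEq F]
    (q : ℕ) (hq : Fintype.card F = q) (r s : F)
    (hirr : Irreducible (X ^ 2 - C r * X - C s : F[X])) :
    (sigmaMap ((1 : GL (Fin 2) F) : Matrix (Fin 2) (Fin 2) F) = id) ∧
    (Function.Injective fun S : GL (Fin 2) F => sigmaMap (S : Matrix (Fin 2) (Fin 2) F)) ∧
    (∀ S T : GL (Fin 2) F,
      sigmaMap ((S * T : GL (Fin 2) F) : Matrix (Fin 2) (Fin 2) F) =
        sigmaMap (T : Matrix (Fin 2) (Fin 2) F) ∘ sigmaMap (S : Matrix (Fin 2) (Fin 2) F)) ∧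
    (∀ f ∈ ATPset F, ∀ m k : F × F, m.2 = 0 →
      ∃ k' : F × F, f '' slopeLine r s m k = slopeLine r s m k') ∧
    (∀ m m' : F × F, m.2 ≠ 0 → m'.2 ≠ 0 →
      ∃ f ∈ ATPset F, ∀ k : F × F, ∃ k' : F × F,
        f '' slopeLine r s m k = slopeLine r s m' k') ∧
    (∀ f ∈ ATPset F, f '' vertLine (0 : F × F) = vertLine 0) ∧
    (∀ c c' : F × F, c ≠ 0 → c' ≠ 0 → ∃ f ∈ ATPset F, f '' vertLine c = vertLine c') := by
  refine ⟨?_, ?_, ?_, ?_, ?_, ?_, ?_⟩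
  · funext P
    simp [sigmaMap, rmul_one]
  · intro S T h
    have hx : ∀ x : F × F, rmul (S : Matrix (Fin 2) (Fin 2) F) x
        = rmul (T : Matrix (Fin 2) (Fin 2) F) x :=
      fun x => congrArg Prod.fst (congrFun h (x, x))
    have h1 := hx (1, 0)
    have h2 := hx (0, 1)
    simp only [rmul, Prod.mk.injEq, one_mul, zero_mul, add_zero, zero_add] at h1 h2
    refine Matrix.GeneralLinearGroup.ext fun i j => ?_
    fin_cases i <;> fin_cases j
    · exact h1.1
    · exact h1.2
    · exact h2.1
    · exact h2.2
  · intro S T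
    funext P
    simp [sigmaMap, Units.val_mul, rmul_rmul]
  · rintro f ⟨S, rfl⟩ m k hm2
    refine ⟨rmul (S : Matrix (Fin 2) (Fin 2) F) k, image_slopeLine r s S m m k fun x => ?_⟩
    have h2 : ∀ y : F × F, hallMul r s y m = (y.1 * m.1, y.2 * m.1) := fun y => by
      simp [hallMul, hm2]
    simp only [h2, rmul, Prod.mk.injEq]
    constructor <;> ring
  · intro m m' hm hm'
    set A : Matrix (Fin 2) (Fin 2) F := !![1, 0; (m'.1 - m.1) * m.2⁻¹, m'.2 * m.2⁻¹] with hA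
    have hdet : A.det ≠ 0 := by
      simp only [hA, Matrix.det_fin_two_of]
      field_simp
      simpa using div_ne_zero hm' hm
    set U : GL (Fin 2) F := Matrix.GeneralLinearGroup.mkOfDetNeZero A hdet with hUdef
    have hU : (U : Matrix (Fin 2) (Fin 2) F) = A := rfl
    refine ⟨sigmaMap (U : Matrix (Fin 2) (Fin 2) F), ⟨U, rfl⟩, fun k =>
      ⟨rmul (U : Matrix (Fin 2) (Fin 2) F) k, image_slopeLine r s U m m' k fun x => ?_⟩⟩
    rw [hU]
    simp only [hallMul, if_neg hm, if_neg hm', rmul, hA, Matrix.cons_val', Matrix.cons_val_zero,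
      Matrix.cons_val_one, Matrix.head_cons, Matrix.empty_val', Matrix.cons_val_fin_one,
      Matrix.head_fin_const, Matrix.of_apply, Prod.mk.injEq]
    have hm2 : m.2 ≠ 0 := hm
    have hm'2 : m'.2 ≠ 0 := hm'
    constructor
    · field_simp
      ring
    · field_simp
      ring
  · rintro f ⟨S, rfl⟩
    rw [image_vertLine, rmul_zero]
  · intro c c' hc hc'
    obtain ⟨U, hU⟩ := exists_gl_e0 c hc
    obtain ⟨V, hV⟩ := exists_gl_e0 c' hc'
    refine ⟨sigmaMap ((U⁻¹ * V : GL (Fin 2) F) : Matrix (Fin 2) (Fin 2) F), ⟨U⁻¹ * V, rfl⟩, ?_⟩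
    rw [image_vertLine]
    congr 1
    rw [Units.val_mul, ← rmul_rmul, ← hU, rmul_cancel_inv, hV]
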